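/- Every k-automatic sequence (k ≥ 2 an integer) with values in a finite set is weakly periodic. -/

import Mathlib

open Filter Topology

/-- The `k`-kernel of a sequence: all subsequences `n ↦ f (k^l * n + r)` with `0 ≤ r < k^l`. -/
def kKernel {Ω : Type*} (k : ℕ) (f : ℕ → Ω) : Set (ℕ → Ω) :=
  {g | ∃ l r : ℕ, r < k ^ l ∧ g = fun n => f (k ^ l * n + r)}

/-- A sequence is `k`-automatic if its `k`-kernel is finite. -/
def IsKAutomatic {Ω : Type*} (k : ℕ) (f : ℕ → Ω) : Prop :=
  (kKernel k f).Finite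

/-- A sequence `f` is weakly periodic if every restriction `n ↦ f (a n + b)` (with `a ≥ 1`)
agrees along two distinct residues `r ≠ r'` modulo some `q ≥ 1`. -/
def WeaklyPeriodic {Ω : Type*} (f : ℕ → Ω) : Prop :=
  ∀ a b : ℕ, 0 < a → ∃ q r r' : ℕ, 0 < q ∧ r ≠ r' ∧
    ∀ n : ℕ, f (a * (q * n + r) + b) = f (a * (q * n + r') + b)

/-- A sequence is periodic (with some period `q ≥ 1`). -/
def PeriodicSeq {Ω : Type*} (f : ℕ → Ω) : Prop :=
  ∃ q : ℕ, 0 < q ∧ ∀ n : ℕ, f (n + q) = f n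

/-- Every `k`-automatic sequence (`k ≥ 2`) with values in a finite set is
weakly periodic. -/
theorem stmt_1 {Ω : Type*} [Finite Ω] (k : ℕ) (hk : 2 ≤ k) (f : ℕ → Ω)
    (hf : IsKAutomatic k f) : WeaklyPeriodic f := by
  intro a b ha
  classical
  have hk1 : 1 < k := hk
  set N := hf.toFinset.card with hN
  set L := N * (a + b + 1) with hL
  have hkL : 0 < k ^ L := Nat.pow_pos (by omega)
  -- the pigeonhole map
  set G : ℕ → (ℕ → Ω) × ℕ :=
    fun r => ((fun n => f (k ^ L * n + (a * r + b) % k ^ L)), (a * r + b) / k ^ L) with hG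
  have hcard : (hf.toFinset ×ˢ Finset.range (a + b + 1)).card < (Finset.range (k ^ L)).card := by
    rw [Finset.card_product, Finset.card_range, Finset.card_range]
    calc N * (a + b + 1) = L := rfl
      _ < k ^ L := Nat.lt_pow_self hk1
  have hmaps : ∀ r ∈ Finset.range (k ^ L),
      G r ∈ hf.toFinset ×ˢ Finset.range (a + b + 1) := by
    intro r hr
    rw [Finset.mem_range] at hr
    rw [Finset.mem_product, Finset.mem_range]
    constructor
    · refine (Set.Finite.mem_toFinset (s := kKernel k f) hf).2 ?_
      exact ⟨L, (a * r + b) % k ^ L, Nat.mod_lt _ hkL, rfl⟩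
    · rw [Nat.div_lt_iff_lt_mul hkL]
      have h1 : a * (r + 1) ≤ a * k ^ L := Nat.mul_le_mul_left a hr
      have h2 : b ≤ b * k ^ L := Nat.le_mul_of_pos_right b hkL
      nlinarith
  obtain ⟨r, hr, r', hr', hne, heq⟩ :=
    Finset.exists_ne_map_eq_of_card_lt_of_maps_to hcard hmaps
  refine ⟨k ^ L, r, r', hkL, hne, ?_⟩
  have hfun : (fun n => f (k ^ L * n + (a * r + b) % k ^ L))
      = (fun n => f (k ^ L * n + (a * r' + b) % k ^ L)) := congrArg Prod.fst heq
  have hdiv : (a * r + b) / k ^ L = (a * r' + b) / k ^ L := congrArg Prod.snd heq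
  have key : ∀ s n : ℕ, a * (k ^ L * n + s) + b
      = k ^ L * (a * n + (a * s + b) / k ^ L) + (a * s + b) % k ^ L := by
    intro s n
    have h := Nat.div_add_mod (a * s + b) (k ^ L)
    set c := (a * s + b) / k ^ L with hc
    set d := (a * s + b) % k ^ L with hd
    calc a * (k ^ L * n + s) + b = k ^ L * (a * n) + (a * s + b) := by ring
      _ = k ^ L * (a * n + c) + d := by rw [Nat.mul_add, add_assoc, h]
  intro n
  calc f (a * (k ^ L * n + r) + b)
      = f (k ^ L * (a * n + (a * r + b) / k ^ L) + (a * r + b) % k ^ L) := by rw [key]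
    _ = f (k ^ L * (a * n + (a * r + b) / k ^ L) + (a * r' + b) % k ^ L) :=
        congrFun hfun _
    _ = f (k ^ L * (a * n + (a * r' + b) / k ^ L) + (a * r' + b) % k ^ L) := by rw [hdiv]
    _ = f (a * (k ^ L * n + r') + b) := by rw [key]
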